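/- Let F be a finite field with q elements and let r be an integer with 1 ≤ r ≤ q. Fix an enumeration F = {α_1, …, α_q}. Let G be the r × (q + 1) matrix whose i-th column, for i ∈ [q], is (1, α_i, α_i², …, α_i^{r−1})ᵀ, and whose last column is the standard basis vector e_r = (0, …, 0, 1)ᵀ. Then G is an MDS matrix: every r × r submatrix formed by selecting any r distinct columns of G is nonsingular. -/
import Mathlib

lemma vand_aux {F : Type*} [Field F] {n : ℕ} (v : Fin n → F) (hv : Function.Injective v) :
    (Matrix.of fun p j : Fin n => v j ^ (p : ℕ)).det ≠ 0 := by
  have h : (Matrix.of fun p j : Fin n => v j ^ (p : ℕ)) = (Matrix.vandermonde v).transpose := rfl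
  rw [h, Matrix.det_transpose, Matrix.det_vandermonde]
  apply Finset.prod_ne_zero_iff.2
  intro i _
  apply Finset.prod_ne_zero_iff.2
  intro j hj
  exact sub_ne_zero.2 fun h => (Finset.mem_Ioi.1 hj).ne' (hv h)



/-- A matrix G with r rows (and columns indexed by an arbitrary type) is MDS if every
r × r submatrix formed by selecting any r distinct columns is nonsingular. -/
def IsMDS {F : Type*} [Field F] {r : ℕ} {n : Type*}
    (G : Matrix (Fin r) n F) : Prop :=
  ∀ σ : Fin r → n, Function.Injective σ →
    (Matrix.of fun p q : Fin r => G p (σ q)).det ≠ 0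

/-- Let F be a finite field with q elements, 1 ≤ r ≤ q, and fix an
enumeration α : Fin q ≃ F.  The r × (q + 1) matrix whose i-th column (i < q) is
(1, α_i, α_i², …, α_i^{r−1})ᵀ and whose last column is (0, …, 0, 1)ᵀ is an MDS
matrix. -/
theorem stmt_11 {F : Type*} [Field F] [Fintype F] {q r : ℕ}
    (hq : Fintype.card F = q) (hr : 1 ≤ r) (hrq : r ≤ q)
    (α : Fin q ≃ F)
    (G : Matrix (Fin r) (Fin (q + 1)) F)
    (hG : ∀ (p : Fin r) (i : Fin (q + 1)),
      G p i = if h : (i : ℕ) < q then (α ⟨i, h⟩) ^ (p : ℕ)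
              else if (p : ℕ) = r - 1 then 1 else 0) :
    IsMDS G := by
  intro σ hσ
  by_cases hcase : ∀ j, (σ j : ℕ) < q
  · have hM : (Matrix.of fun p j : Fin r => G p (σ j)) =
        Matrix.of fun p j : Fin r => (α ⟨σ j, hcase j⟩ : F) ^ (p : ℕ) := by
      ext p j
      simp [hG, hcase j]
    rw [hM]
    apply vand_aux
    intro a b h
    apply hσ
    have h2 := α.injective h
    exact Fin.ext (by simpa using congrArg Fin.val h2)
  · push_neg at hcase
    obtain ⟨j0, hj0⟩ := hcase
    have hσj0 : σ j0 = Fin.last q := by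
      have := (σ j0).isLt
      apply Fin.ext
      simp only [Fin.val_last]
      omega
    obtain ⟨m, rfl⟩ : ∃ m, r = m + 1 := ⟨r - 1, by omega⟩
    set π := Equiv.swap j0 (Fin.last m) with hπ
    set M : Matrix (Fin (m+1)) (Fin (m+1)) F :=
      Matrix.of fun p j => G p (σ j) with hM
    have hperm : (M.submatrix id π).det = (Equiv.Perm.sign π : ℤ) * M.det :=
      Matrix.det_permute' π M
    suffices h : (M.submatrix id π).det ≠ 0 by
      intro h0
      rw [hperm, h0, mul_zero] at h
      exact h rfl
    set N := M.submatrix id π with hN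
    have hne : ∀ j : Fin m, ((σ (π j.castSucc)) : ℕ) < q := by
      intro j
      have h1 : π j.castSucc ≠ j0 := by
        intro h
        have h2 : j.castSucc = Fin.last m := by
          have := congrArg π h
          simpa [hπ, Equiv.swap_apply_left] using this
        exact absurd h2 (Fin.castSucc_lt_last j).ne
      have h2 : σ (π j.castSucc) ≠ Fin.last q := fun h => h1 (hσ (h.trans hσj0.symm))
      have h3 : ((σ (π j.castSucc)) : ℕ) ≠ q := fun h =>
        h2 (Fin.ext (by simp [Fin.val_last, h]))
      have := (σ (π j.castSucc)).isLt
      omega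
    set w : Fin m → F := fun j => α ⟨σ (π j.castSucc), hne j⟩ with hw
    have hw_inj : Function.Injective w := by
      intro a b h
      have h2 := α.injective h
      have h3 : σ (π a.castSucc) = σ (π b.castSucc) :=
        Fin.ext (by simpa using congrArg Fin.val h2)
      exact Fin.castSucc_injective m (π.injective (hσ h3))
    have hNlast : ∀ p : Fin (m+1), N p (Fin.last m) = if (p : ℕ) = m then 1 else 0 := by
      intro p
      have : π (Fin.last m) = j0 := Equiv.swap_apply_right _ _
      simp [hN, hM, this, hσj0, hG]
    have hNcol : ∀ (p : Fin (m+1)) (j : Fin m), N p j.castSucc = w j ^ (p : ℕ) := by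
      intro p j
      simp [hN, hM, hG, hne j, hw]
    rw [Matrix.det_succ_column N (Fin.last m)]
    rw [Finset.sum_eq_single (Fin.last m) (fun i _ hi => by
      rw [hNlast i, if_neg (fun h => hi (Fin.ext (by simp [h]))), mul_zero, zero_mul])
      (fun h => absurd (Finset.mem_univ _) h)]
    rw [hNlast, if_pos (by simp)]
    have hsign : ((-1 : F) ^ ((Fin.last m : ℕ) + (Fin.last m : ℕ))) = 1 := by
      simp [Even.neg_one_pow ⟨m, rfl⟩]
    rw [hsign]
    simp only [one_mul, mul_one]
    have hsub : N.submatrix (Fin.last m).succAbove (Fin.last m).succAbove =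
        Matrix.of fun p j : Fin m => w j ^ (p : ℕ) := by
      ext p j
      simp [Fin.succAbove_last, hNcol]
    rw [hsub]
    exact vand_aux w hw_inj
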